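/- Let E be a finite effect algebra with exactly three pairwise distinct atoms a_1, a_2, a_3 such that a_1 ⊕ a_2 ⊕ a_3 = 1 and 4a_1 = 4a_2 = 4a_3 = 1, and such that Seq(E) = {(1,1,1), (4,0,0), (0,4,0), (0,0,4)} ⊆ ℕ^3. Then E has no state. -/

import Mathlib

/-- An effect algebra: a set with 0, 1 and a partially defined binary
operation `⊕`, modeled as an `Option`-valued operation. -/
structure EffectAlgebra (E : Type*) where
  oplus : E → E → Option E
  zero : E
  one : E
  comm : ∀ p q, oplus p q = oplus q p
  assoc : ∀ p q r s qr, oplus q r = some qr → oplus p qr = some s →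
    ∃ pq, oplus p q = some pq ∧ oplus pq r = some s
  orthosupp : ∀ p, ∃! q, oplus p q = some one
  zero_unit : ∀ p q, oplus one p = some q → p = zero

namespace EffectAlgebra

variable {E : Type*}

/-- `p ≤ q` iff there is `r` with `p ⊕ r` defined and equal to `q`. -/
def le (W : EffectAlgebra E) (p q : E) : Prop := ∃ r, W.oplus p r = some q

/-- An atom is a minimal element of `E \ {0}`. -/
def IsAtomElem (W : EffectAlgebra E) (x : E) : Prop :=
  x ≠ W.zero ∧ ∀ y : E, W.le y x → y ≠ W.zero → y = x

/-- Partial orthosum of a list of elements. -/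
def listSum (W : EffectAlgebra E) : List E → Option E
  | [] => some W.zero
  | x :: xs => (listSum W xs).bind (fun y => W.oplus x y)

/-- The orthosum `k 0 • a 0 ⊕ ⋯ ⊕ k (m-1) • a (m-1)`, when defined. -/
def mulSum (W : EffectAlgebra E) {m : ℕ} (a : Fin m → E) (k : Fin m → ℕ) : Option E :=
  W.listSum ((List.ofFn (fun t => List.replicate (k t) (a t))).flatten)

/-- `Seq(E)`: tuples `k` with `⨁ k t • a t` defined and equal to `1`. -/
def SeqSet (W : EffectAlgebra E) {m : ℕ} (a : Fin m → E) : Set (Fin m → ℕ) :=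
  {k | W.mulSum a k = some W.one}

/-- `a : Fin m → E` enumerates the atoms of `E` without repetition. -/
def AtomFamily (W : EffectAlgebra E) {m : ℕ} (a : Fin m → E) : Prop :=
  Function.Injective a ∧ (∀ t, W.IsAtomElem (a t)) ∧
    ∀ x : E, W.IsAtomElem x → ∃ t, x = a t

/-- `A ∈ M(E)`: the rows of `A` are pairwise distinct and enumerate `Seq(E)`. -/
def MemM (W : EffectAlgebra E) {m n : ℕ} (a : Fin m → E) (A : Matrix (Fin n) (Fin m) ℕ) : Prop :=
  (∀ i j : Fin n, i ≠ j → ∃ t, A i t ≠ A j t) ∧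
    {k : Fin m → ℕ | ∃ i, A i = k} = W.SeqSet a

/-- A state on an effect algebra. -/
def IsState (W : EffectAlgebra E) (s : E → ℝ) : Prop :=
  (∀ x, 0 ≤ s x ∧ s x ≤ 1) ∧ s W.one = 1 ∧
    ∀ p q r, W.oplus p q = some r → s p + s q ≤ 1 ∧ s r = s p + s q

end EffectAlgebra

/-- `(A|1)`: the matrix `A` augmented by a column of ones. -/
def augmentOnes {n m : ℕ} {R : Type*} [One R] (A : Matrix (Fin n) (Fin m) R) :
    Matrix (Fin n) (Fin (m + 1)) R :=
  Matrix.of fun i j => if h : (j : ℕ) < m then A i ⟨j, h⟩ else 1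

/-- The paper's example `E₄`: a finite effect algebra with three atoms
satisfying `a₁ ⊕ a₂ ⊕ a₃ = 1` and `4a₁ = 4a₂ = 4a₃ = 1`, whose `Seq(E)` is
exactly `{(1,1,1), (4,0,0), (0,4,0), (0,0,4)}`, has no state. -/

lemma state_zero {E : Type*} (W : EffectAlgebra E) (s : E → ℝ)
    (hs : W.IsState s) : s W.zero = 0 := by
  obtain ⟨q, hq, -⟩ := W.orthosupp W.one
  have hz : q = W.zero := W.zero_unit q W.one hq
  have := (hs.2.2 W.one q W.one hq).2
  subst hz; linarith

lemma state_listSum {E : Type*} (W : EffectAlgebra E) (s : E → ℝ)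
    (hs : W.IsState s) : ∀ L v, W.listSum L = some v → s v = (L.map s).sum := by
  intro L
  induction L with
  | nil => intro v hv; simp [EffectAlgebra.listSum] at hv; subst hv
           simpa using state_zero W s hs
  | cons x xs ih =>
      intro v hv
      simp only [EffectAlgebra.listSum, Option.bind_eq_some_iff] at hv
      obtain ⟨y, hy, hxy⟩ := hv
      have := (hs.2.2 x y v hxy).2
      simp [this, ih y hy]

theorem E4_no_state {E : Type*} [Fintype E] (W : EffectAlgebra E)
    (a : Fin 3 → E) (ha : W.AtomFamily a)
    (h111 : W.mulSum a ![1,1,1] = some W.one)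
    (h400 : W.mulSum a ![4,0,0] = some W.one)
    (h040 : W.mulSum a ![0,4,0] = some W.one)
    (h004 : W.mulSum a ![0,0,4] = some W.one)
    (hSeq : W.SeqSet a =
      {k : Fin 3 → ℕ | k = ![1,1,1] ∨ k = ![4,0,0] ∨ k = ![0,4,0] ∨ k = ![0,0,4]}) :
    ¬ ∃ h : E → ℝ, W.IsState h := by
  rintro ⟨s, hs⟩
  have key : ∀ k : Fin 3 → ℕ, W.mulSum a k = some W.one →
      s W.one = ((List.ofFn (fun t => List.replicate (k t) (a t))).flatten.map s).sum := by
    intro k hk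
    exact state_listSum W s hs _ _ hk
  have e1 := key _ h111
  have e2 := key _ h400
  have e3 := key _ h040
  have e4 := key _ h004
  simp [List.ofFn_succ, List.replicate, hs.2.1] at e1 e2 e3 e4
  linarith
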